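/- Equivalence of nuclear-norm regularized matrix completion and its bilinear factorized form: let Z, W ∈ ℝ^{M×N}, μ ≥ 0, and P ≥ min(M, N). Then the infimum over C ∈ ℝ^{M×P} and B ∈ ℝ^{N×P} of (1/2)‖(Z − C Bᵀ) ⊙ W‖_F² + (μ/2)(‖B‖_F² + ‖C‖_F²) equals the infimum over A ∈ ℝ^{M×N} of (1/2)‖(Z − A) ⊙ W‖_F² + μ‖A‖_*. -/

import Mathlib

open Matrix

/-- Squared Frobenius norm of a real matrix: `∑_{i,j} M_{ij}²`. -/
def frobSq {m n : ℕ} (X : Matrix (Fin m) (Fin n) ℝ) : ℝ :=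
  ∑ i, ∑ j, (X i j) ^ 2

/-- Nuclear norm of a real matrix: the trace of the positive semidefinite
square root of `AᴴA = AᵀA` (i.e., the sum of singular values of `A`). -/
noncomputable def nuclearNorm {m n : ℕ} (A : Matrix (Fin m) (Fin n) ℝ) : ℝ :=
  ((Matrix.posSemidef_conjTranspose_mul_self A).1.eigenvectorUnitary.1 *
    diagonal ((√·) ∘ (Matrix.posSemidef_conjTranspose_mul_self A).1.eigenvalues) *
    (star (Matrix.posSemidef_conjTranspose_mul_self A).1.eigenvectorUnitary :
      Matrix (Fin n) (Fin n) ℝ)).trace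

lemma frobSq_eq_trace {m n : ℕ} (X : Matrix (Fin m) (Fin n) ℝ) :
    frobSq X = (Xᴴ * X).trace := by
  simp only [frobSq, Matrix.trace, Matrix.diag, Matrix.mul_apply, Matrix.conjTranspose_apply,
    star_trivial]
  rw [Finset.sum_comm]
  simp [sq]

lemma frobSq_nonneg {m n : ℕ} (X : Matrix (Fin m) (Fin n) ℝ) : 0 ≤ frobSq X := by
  apply Finset.sum_nonneg; intro i _; apply Finset.sum_nonneg; intro j _; positivity

private lemma conj_diag_aux {n : ℕ} (G V : Matrix (Fin n) (Fin n) ℝ) (lam : Fin n → ℝ)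
    (h1 : Vᴴ * V = 1) (hspec : G = V * Matrix.diagonal lam * Vᴴ) :
    Vᴴ * G * V = Matrix.diagonal lam := by
  rw [hspec, Matrix.mul_assoc, Matrix.mul_assoc, h1, Matrix.mul_one, ← Matrix.mul_assoc, h1,
    Matrix.one_mul]

lemma svd_setup {m n : ℕ} (X : Matrix (Fin m) (Fin n) ℝ) :
    ∃ (V : Matrix (Fin n) (Fin n) ℝ) (lam : Fin n → ℝ),
      Vᴴ * V = 1 ∧ V * Vᴴ = 1 ∧ (∀ j, 0 ≤ lam j) ∧
      (X * V)ᴴ * (X * V) = Matrix.diagonal lam ∧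
      nuclearNorm X = ∑ j, Real.sqrt (lam j) ∧
      Fintype.card {j // lam j ≠ 0} ≤ min m n := by
  have hG := Matrix.posSemidef_conjTranspose_mul_self X
  have hH : (Xᴴ * X).IsHermitian := hG.1
  have h1 : (hH.eigenvectorUnitary : Matrix (Fin n) (Fin n) ℝ)ᴴ * hH.eigenvectorUnitary = 1 := by
    rw [← Matrix.star_eq_conjTranspose]
    exact Unitary.star_mul_self_of_mem hH.eigenvectorUnitary.2
  have h2 : (hH.eigenvectorUnitary : Matrix (Fin n) (Fin n) ℝ) * (hH.eigenvectorUnitary : Matrix (Fin n) (Fin n) ℝ)ᴴ = 1 := by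
    rw [← Matrix.star_eq_conjTranspose]
    exact Unitary.mul_star_self_of_mem hH.eigenvectorUnitary.2
  have hspec : Xᴴ * X = (hH.eigenvectorUnitary : Matrix (Fin n) (Fin n) ℝ) * Matrix.diagonal hH.eigenvalues *
      (hH.eigenvectorUnitary : Matrix (Fin n) (Fin n) ℝ)ᴴ := by
    have := hH.spectral_theorem
    simpa [Matrix.star_eq_conjTranspose] using this
  refine ⟨hH.eigenvectorUnitary, hH.eigenvalues, h1, h2, fun j => hG.eigenvalues_nonneg j,
    ?_, ?_, ?_⟩
  · rw [Matrix.conjTranspose_mul, Matrix.mul_assoc, ← Matrix.mul_assoc Xᴴ,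
      ← Matrix.mul_assoc]
    exact conj_diag_aux _ _ _ h1 hspec
  · unfold nuclearNorm
    rw [Matrix.trace_mul_cycle, Matrix.star_eq_conjTranspose, h1, Matrix.one_mul, Matrix.trace_diagonal]
    rfl
  · have hc : Fintype.card {j // hH.eigenvalues j ≠ 0} = X.rank := by
      rw [← X.rank_conjTranspose_mul_self]
      exact hH.rank_eq_card_non_zero_eigs.symm
    rw [hc]
    exact le_min (by simpa using X.rank_le_card_height) (by simpa using X.rank_le_card_width)

lemma nuclearNorm_factor_le {m n p : ℕ} (C : Matrix (Fin m) (Fin p) ℝ)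
    (B : Matrix (Fin n) (Fin p) ℝ) :
    nuclearNorm (C * Bᵀ) ≤ (frobSq B + frobSq C) / 2 := by
  classical
  set X : Matrix (Fin m) (Fin n) ℝ := C * Bᵀ with hX
  obtain ⟨V, lam, h1, h2, hlam0, hK, hnn, -⟩ := svd_setup X
  set σ : Fin n → ℝ := fun j => Real.sqrt (lam j) with hσ
  set K : Matrix (Fin m) (Fin n) ℝ := X * V with hKdef
  set Uu : Matrix (Fin m) (Fin n) ℝ := K * Matrix.diagonal (fun j => (σ j)⁻¹) with hUu
  set e : Fin n → ℝ := fun j => if lam j = 0 then 0 else 1 with he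
  -- Uuᴴ * Uu = diagonal e
  have hUU : Uuᴴ * Uu = Matrix.diagonal e := by
    rw [hUu, Matrix.conjTranspose_mul, Matrix.diagonal_conjTranspose, Matrix.mul_assoc,
      ← Matrix.mul_assoc Kᴴ K, hK, Matrix.diagonal_mul_diagonal, Matrix.diagonal_mul_diagonal]
    apply congrArg Matrix.diagonal
    funext j
    simp only [star_trivial, he]
    by_cases h : lam j = 0
    · simp [h]
    · have hpos : 0 < lam j := lt_of_le_of_ne (hlam0 j) (Ne.symm h)
      have hσne : σ j ≠ 0 := by simp only [hσ]; positivity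
      simp only [h, if_false]
      field_simp
      exact (Real.sq_sqrt (hlam0 j)).symm
  -- Uuᴴ * K = diagonal σ
  have hUK : Uuᴴ * K = Matrix.diagonal σ := by
    rw [hUu, Matrix.conjTranspose_mul, Matrix.diagonal_conjTranspose, Matrix.mul_assoc, hK]
    rw [Matrix.diagonal_mul_diagonal]
    apply congrArg Matrix.diagonal
    funext j
    simp only [star_trivial, hσ]
    by_cases h : lam j = 0
    · simp [h]
    · have hpos : 0 < lam j := lt_of_le_of_ne (hlam0 j) (Ne.symm h)
      have hσne : Real.sqrt (lam j) ≠ 0 := by positivity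
      field_simp
      exact (Real.sq_sqrt (hlam0 j)).symm
  -- nuclear norm as a trace
  have htr : nuclearNorm X = Matrix.trace (Uuᴴ * K) := by
    rw [hUK, Matrix.trace_diagonal, hnn]

  -- Uu * diagonal e = Uu
  have hUe : Uu * Matrix.diagonal e = Uu := by
    ext i j
    rw [Matrix.mul_diagonal]
    by_cases h : lam j = 0
    · have h0 : Uu i j = 0 := by
        rw [hUu, Matrix.mul_diagonal]
        simp [hσ, h]
      simp [h0]
    · simp [he, h]
  clear_value Uu K X σ e
  set Pm : Matrix (Fin m) (Fin m) ℝ := Uu * Uuᴴ with hPm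
  have hPP : Pm * Pm = Pm := by
    rw [hPm, Matrix.mul_assoc, ← Matrix.mul_assoc Uuᴴ Uu Uuᴴ, hUU, ← Matrix.mul_assoc, hUe]
  have hPsymm : Pmᴴ = Pm := by
    rw [hPm, Matrix.conjTranspose_mul, Matrix.conjTranspose_conjTranspose]
  set Q : Matrix (Fin m) (Fin m) ℝ := 1 - Pm with hQ
  have hQsymm : Qᴴ = Q := by
    rw [hQ, Matrix.conjTranspose_sub, Matrix.conjTranspose_one, hPsymm]
  have hQQ : Q * Q = Q := by
    rw [hQ, Matrix.mul_sub, Matrix.sub_mul, Matrix.sub_mul, hPP, Matrix.one_mul,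
      Matrix.mul_one, Matrix.one_mul]
    abel
  -- trace(Pm * (C * Cᴴ)) ≤ trace (C * Cᴴ)
  have key : Matrix.trace (Pm * (C * Cᴴ)) ≤ Matrix.trace (C * Cᴴ) := by
    have h0 : 0 ≤ frobSq (Q * C) := frobSq_nonneg _
    have heq : frobSq (Q * C) = Matrix.trace (C * Cᴴ) - Matrix.trace (Pm * (C * Cᴴ)) := by
      rw [frobSq_eq_trace, Matrix.conjTranspose_mul, hQsymm, ← Matrix.mul_assoc,
        Matrix.mul_assoc Cᴴ Q Q, hQQ, hQ, Matrix.mul_sub, Matrix.mul_one, Matrix.sub_mul,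
        Matrix.trace_sub, Matrix.trace_mul_comm Cᴴ C]
      congr 1
      rw [Matrix.trace_mul_cycle, ← Matrix.mul_assoc, hPm,
        Matrix.mul_assoc (C * Cᴴ) Uu Uuᴴ, Matrix.trace_mul_comm]
    linarith
  -- frobSq (Cᴴ * Uu) = trace(Pm * (C * Cᴴ))
  have hRtr : frobSq (Cᴴ * Uu) = Matrix.trace (Pm * (C * Cᴴ)) := by
    rw [frobSq_eq_trace, Matrix.conjTranspose_mul, Matrix.conjTranspose_conjTranspose,
      Matrix.mul_assoc Uuᴴ C (Cᴴ * Uu), ← Matrix.mul_assoc C Cᴴ Uu,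
      ← Matrix.mul_assoc Uuᴴ (C * Cᴴ) Uu, Matrix.trace_mul_cycle, hPm, Matrix.mul_assoc]
  -- frobSq (Bᴴ * V) = frobSq B
  have hStr : frobSq (Bᴴ * V) = frobSq B := by
    rw [frobSq_eq_trace, Matrix.conjTranspose_mul, Matrix.conjTranspose_conjTranspose,
      Matrix.trace_mul_comm, Matrix.mul_assoc Bᴴ V (Vᴴ * B), ← Matrix.mul_assoc V Vᴴ B, h2,
      Matrix.one_mul, ← frobSq_eq_trace]
  -- factor the trace
  have hfac : Uuᴴ * K = (Cᴴ * Uu)ᴴ * (Bᴴ * V) := by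
    have hBt : Bᴴ = Bᵀ := Matrix.conjTranspose_eq_transpose_of_trivial B
    calc Uuᴴ * K = Uuᴴ * (C * (Bᴴ * V)) := by
          rw [hKdef, hX, ← hBt, Matrix.mul_assoc C Bᴴ V]
      _ = (Cᴴ * Uu)ᴴ * (Bᴴ * V) := by
          rw [Matrix.conjTranspose_mul, Matrix.conjTranspose_conjTranspose, Matrix.mul_assoc]
  have hexp : Matrix.trace ((Cᴴ * Uu)ᴴ * (Bᴴ * V))
      = ∑ j, ∑ q, (Cᴴ * Uu) q j * (Bᴴ * V) q j := by
    simp [Matrix.trace, Matrix.diag, Matrix.mul_apply, Matrix.conjTranspose_apply, mul_comm]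
  have hsumsq : ∀ (Y : Matrix (Fin p) (Fin n) ℝ), frobSq Y = ∑ j, ∑ q, (Y q j)^2 := by
    intro Y; rw [frobSq, Finset.sum_comm]
  have hfin : frobSq C = Matrix.trace (C * Cᴴ) := by
    rw [frobSq_eq_trace, Matrix.trace_mul_comm]
  calc nuclearNorm X = ∑ j, ∑ q, (Cᴴ * Uu) q j * (Bᴴ * V) q j := by
        rw [htr, hfac, hexp]
    _ ≤ ∑ j, ∑ q, (((Cᴴ * Uu) q j)^2 + ((Bᴴ * V) q j)^2)/2 := by
        apply Finset.sum_le_sum; intro j _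
        apply Finset.sum_le_sum; intro q _
        nlinarith [sq_nonneg ((Cᴴ * Uu) q j - (Bᴴ * V) q j)]
    _ = (frobSq (Cᴴ * Uu) + frobSq (Bᴴ * V))/2 := by
        rw [hsumsq, hsumsq]
        simp only [← Finset.sum_div, ← Finset.sum_add_distrib]
    _ ≤ (frobSq B + frobSq C)/2 := by
        rw [hRtr, hStr, hfin]
        linarith

lemma exists_factorization {m n p : ℕ} (X : Matrix (Fin m) (Fin n) ℝ) (hp : min m n ≤ p) :
    ∃ (C : Matrix (Fin m) (Fin p) ℝ) (B : Matrix (Fin n) (Fin p) ℝ),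
      X = C * Bᵀ ∧ frobSq B + frobSq C = 2 * nuclearNorm X := by
  classical
  obtain ⟨V, lam, h1, h2, hlam0, hK, hnn, hcard⟩ := svd_setup X
  set σ : Fin n → ℝ := fun j => Real.sqrt (lam j) with hσ
  set e : Fin n → ℝ := fun j => if lam j = 0 then 0 else 1 with he
  have hσ0 : ∀ j, 0 ≤ σ j := fun j => Real.sqrt_nonneg _
  have hσe : ∀ j, lam j = 0 → σ j = 0 := by intro j h; simp [hσ, h]
  -- embedding of the support into Fin p
  have hcard' : Fintype.card {j // lam j ≠ 0} ≤ Fintype.card (Fin p) := by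
    simpa using le_trans hcard hp
  obtain ⟨f⟩ := Function.Embedding.nonempty_of_card_le hcard'
  set E : Matrix (Fin n) (Fin p) ℝ :=
    Matrix.of (fun j q => if h : lam j ≠ 0 then (if q = f ⟨j, h⟩ then 1 else 0) else 0) with hE
  have hEE : E * Eᴴ = Matrix.diagonal e := by
    ext j k
    rw [Matrix.mul_apply]
    simp only [Matrix.conjTranspose_apply, star_trivial, hE, Matrix.of_apply]
    by_cases hj : lam j ≠ 0
    · by_cases hk : lam k ≠ 0
      · simp only [dif_pos hj, dif_pos hk]
        have hred : ∀ q : Fin p, (if q = f ⟨j, hj⟩ then (1:ℝ) else 0) *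
            (if q = f ⟨k, hk⟩ then (1:ℝ) else 0)
            = if q = f ⟨j, hj⟩ then (if q = f ⟨k, hk⟩ then (1:ℝ) else 0) else 0 := by
          intro q; split <;> simp
        rw [Finset.sum_congr rfl (fun q _ => hred q), Finset.sum_ite_eq' Finset.univ]
        simp only [Finset.mem_univ, if_true]
        by_cases hjk : j = k
        · subst hjk
          simp [Matrix.diagonal_apply_eq, he, hj]
        · have : f ⟨j, hj⟩ ≠ f ⟨k, hk⟩ := by
            intro hc
            exact hjk (Subtype.mk_eq_mk.1 (f.injective hc))
          simp [this, Matrix.diagonal_apply_ne _ hjk]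
      · push_neg at hk
        have hjk : j ≠ k := by rintro rfl; exact hj hk
        simp [hk, Matrix.diagonal_apply_ne _ hjk]
    · push_neg at hj
      by_cases hjk : j = k
      · subst hjk; simp [he, hj]
      · simp [hj, Matrix.diagonal_apply_ne _ hjk]

  -- columns of X*V with zero eigenvalue vanish
  have hKcol : ∀ (i : Fin m) (j : Fin n), lam j = 0 → (X * V) i j = 0 := by
    intro i j hj
    have hd := congrFun (congrFun hK j) j
    rw [Matrix.mul_apply] at hd
    simp only [Matrix.conjTranspose_apply, star_trivial, Matrix.diagonal_apply_eq] at hd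
    have hsum : ∑ i, ((X * V) i j)^2 = 0 := by
      rw [← hj, ← hd]
      exact Finset.sum_congr rfl (fun i _ => sq ((X * V) i j))
    have := (Finset.sum_eq_zero_iff_of_nonneg (fun i _ => sq_nonneg ((X * V) i j))).1 hsum i
      (Finset.mem_univ i)
    exact pow_eq_zero_iff two_ne_zero |>.1 this
  have hKe : X * V * Matrix.diagonal e = X * V := by
    ext i j
    rw [Matrix.mul_diagonal]
    by_cases h : lam j = 0
    · rw [hKcol i j h]; ring
    · simp [he, h]
  set Vw : Matrix (Fin n) (Fin n) ℝ := V * Matrix.diagonal (fun j => Real.sqrt (σ j)) with hVw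
  set Uf : Matrix (Fin m) (Fin n) ℝ :=
    X * V * Matrix.diagonal (fun j => (Real.sqrt (σ j))⁻¹) with hUf
  -- interface facts
  have hVwV : Vwᴴ * Vw = Matrix.diagonal σ := by
    rw [hVw, Matrix.conjTranspose_mul, Matrix.diagonal_conjTranspose, Matrix.mul_assoc,
      ← Matrix.mul_assoc Vᴴ V _, h1, Matrix.one_mul, Matrix.diagonal_mul_diagonal]
    apply congrArg Matrix.diagonal
    funext j
    simp only [star_trivial]
    exact Real.mul_self_sqrt (hσ0 j)
  have hUfU : Ufᴴ * Uf = Matrix.diagonal σ := by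
    rw [hUf, Matrix.conjTranspose_mul, Matrix.diagonal_conjTranspose, Matrix.mul_assoc,
      ← Matrix.mul_assoc (X * V)ᴴ (X * V) _, hK, Matrix.diagonal_mul_diagonal,
      Matrix.diagonal_mul_diagonal]
    apply congrArg Matrix.diagonal
    funext j
    simp only [star_trivial]
    by_cases h : lam j = 0
    · simp [hσ, h]
    · have hpos : 0 < lam j := lt_of_le_of_ne (hlam0 j) (Ne.symm h)
      have hσpos : 0 < σ j := Real.sqrt_pos.2 hpos
      have hx : Real.sqrt (σ j) ≠ 0 := by positivity
      have hxx : Real.sqrt (σ j) * Real.sqrt (σ j) = σ j := Real.mul_self_sqrt (hσ0 j)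
      have hσσ : σ j * σ j = lam j := Real.mul_self_sqrt (hlam0 j)
      field_simp
      nlinarith [hxx, hσσ]
  have hVwH : Vwᴴ = Matrix.diagonal (fun j => Real.sqrt (σ j)) * Vᴴ := by
    rw [hVw, Matrix.conjTranspose_mul, Matrix.diagonal_conjTranspose]
    refine congrArg (· * Vᴴ) (congrArg Matrix.diagonal ?_)
    funext j; simp
  have hde : (fun j => (Real.sqrt (σ j))⁻¹ * e j * Real.sqrt (σ j)) = e := by
    funext j
    by_cases h : lam j = 0
    · simp [he, h]
    · have hpos : 0 < lam j := lt_of_le_of_ne (hlam0 j) (Ne.symm h)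
      have hσpos : 0 < σ j := Real.sqrt_pos.2 hpos
      have hx : Real.sqrt (σ j) ≠ 0 := by positivity
      simp only [he, h, if_false]
      field_simp
  have hXfac : Uf * Matrix.diagonal e * Vwᴴ = X := by
    rw [hUf, hVwH]
    simp only [← Matrix.mul_assoc]
    rw [Matrix.mul_assoc (X * V) (Matrix.diagonal fun j => (Real.sqrt (σ j))⁻¹)
        (Matrix.diagonal e), Matrix.diagonal_mul_diagonal, Matrix.mul_assoc (X * V),
      Matrix.diagonal_mul_diagonal, hde, hKe, Matrix.mul_assoc, h2, Matrix.mul_one]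
  clear_value E Vw Uf σ e
  -- trace computation for Eᴴ * diagonal d * E
  have traceEDE : ∀ d : Fin n → ℝ, (∀ j, e j = 0 → d j = 0) →
      Matrix.trace (Eᴴ * Matrix.diagonal d * E) = ∑ j, d j := by
    intro d hd
    rw [Matrix.trace_mul_cycle, hEE, Matrix.diagonal_mul_diagonal, Matrix.trace_diagonal]
    apply Finset.sum_congr rfl
    intro j _
    by_cases h : e j = 0
    · rw [h, hd j h]; ring
    · have : e j = 1 := by
        by_contra hc
        simp only [he] at h hc
        by_cases hl : lam j = 0 <;> simp [hl] at h hc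
      rw [this]; ring
  have hBf : frobSq (Vw * E) = ∑ j, σ j := by
    rw [frobSq_eq_trace, Matrix.conjTranspose_mul, Matrix.mul_assoc Eᴴ Vwᴴ _,
      ← Matrix.mul_assoc Vwᴴ Vw E, hVwV, ← Matrix.mul_assoc]
    exact traceEDE σ (fun j hj => by
      simp only [he] at hj
      by_cases hl : lam j = 0
      · exact hσe j hl
      · simp [hl] at hj)
  have hCf : frobSq (Uf * E) = ∑ j, σ j := by
    rw [frobSq_eq_trace, Matrix.conjTranspose_mul, Matrix.mul_assoc Eᴴ Ufᴴ _,
      ← Matrix.mul_assoc Ufᴴ Uf E, hUfU, ← Matrix.mul_assoc]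
    exact traceEDE σ (fun j hj => by
      simp only [he] at hj
      by_cases hl : lam j = 0
      · exact hσe j hl
      · simp [hl] at hj)
  refine ⟨Uf * E, Vw * E, ?_, ?_⟩
  · rw [← Matrix.conjTranspose_eq_transpose_of_trivial, Matrix.conjTranspose_mul,
      ← Matrix.mul_assoc (Uf * E) Eᴴ Vwᴴ, Matrix.mul_assoc Uf E Eᴴ, hEE]
    exact hXfac.symm
  · rw [hBf, hCf, hnn]
    ring

lemma nuclearNorm_nonneg {m n : ℕ} (A : Matrix (Fin m) (Fin n) ℝ) : 0 ≤ nuclearNorm A := by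
  obtain ⟨V, lam, -, -, hlam0, -, hnn, -⟩ := svd_setup A
  rw [hnn]
  exact Finset.sum_nonneg fun j _ => Real.sqrt_nonneg _

/-- Equivalence of nuclear-norm regularized matrix completion and its bilinear
factorized form: for `P ≥ min(M, N)` and `μ ≥ 0`, the two infima coincide. -/
theorem factorized_matrix_completion_equivalence (M N P : ℕ)
    (Z W : Matrix (Fin M) (Fin N) ℝ) (μ : ℝ) (hμ : 0 ≤ μ) (hP : min M N ≤ P) :
    sInf {v : ℝ | ∃ (C : Matrix (Fin M) (Fin P) ℝ) (B : Matrix (Fin N) (Fin P) ℝ),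
        v = (1 / 2) * frobSq (Matrix.hadamard (Z - C * Bᵀ) W) +
          (μ / 2) * (frobSq B + frobSq C)} =
      sInf {v : ℝ | ∃ A : Matrix (Fin M) (Fin N) ℝ,
        v = (1 / 2) * frobSq (Matrix.hadamard (Z - A) W) + μ * nuclearNorm A} := by
  set S1 : Set ℝ := {v : ℝ | ∃ (C : Matrix (Fin M) (Fin P) ℝ) (B : Matrix (Fin N) (Fin P) ℝ),
      v = (1 / 2) * frobSq (Matrix.hadamard (Z - C * Bᵀ) W) +
        (μ / 2) * (frobSq B + frobSq C)} with hS1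
  set S2 : Set ℝ := {v : ℝ | ∃ A : Matrix (Fin M) (Fin N) ℝ,
      v = (1 / 2) * frobSq (Matrix.hadamard (Z - A) W) + μ * nuclearNorm A} with hS2
  have hne1 : S1.Nonempty := ⟨_, 0, 0, rfl⟩
  have hne2 : S2.Nonempty := ⟨_, 0, rfl⟩
  have hbdd1 : BddBelow S1 := by
    refine ⟨0, ?_⟩
    rintro v ⟨C, B, rfl⟩
    have h1 := frobSq_nonneg (Matrix.hadamard (Z - C * Bᵀ) W)
    have hb := frobSq_nonneg B
    have hc := frobSq_nonneg C
    have := mul_nonneg hμ (add_nonneg hb hc)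
    linarith
  have hbdd2 : BddBelow S2 := by
    refine ⟨0, ?_⟩
    rintro v ⟨A, rfl⟩
    have h1 := frobSq_nonneg (Matrix.hadamard (Z - A) W)
    have h2 := mul_nonneg hμ (nuclearNorm_nonneg A)
    linarith
  apply le_antisymm
  · refine le_csInf hne2 ?_
    rintro v ⟨A, rfl⟩
    obtain ⟨C, B, hCB, hfro⟩ := exists_factorization A hP
    have hmem : (1 / 2) * frobSq (Matrix.hadamard (Z - C * Bᵀ) W) +
        (μ / 2) * (frobSq B + frobSq C) ∈ S1 := ⟨C, B, rfl⟩
    refine le_trans (csInf_le hbdd1 hmem) (le_of_eq ?_)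
    rw [← hCB, hfro]
    ring
  · refine le_csInf hne1 ?_
    rintro v ⟨C, B, rfl⟩
    have hmem : (1 / 2) * frobSq (Matrix.hadamard (Z - C * Bᵀ) W) +
        μ * nuclearNorm (C * Bᵀ) ∈ S2 := ⟨C * Bᵀ, rfl⟩
    refine le_trans (csInf_le hbdd2 hmem) ?_
    have h := nuclearNorm_factor_le C B
    have h2 := mul_le_mul_of_nonneg_left h hμ
    have : μ * ((frobSq B + frobSq C) / 2) = (μ / 2) * (frobSq B + frobSq C) := by ring
    linarith
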